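/- arXiv:2005.04648 — 2 statements merged into one kernel-verified Lean document; each statement's English description precedes it below -/
import Mathlib

section
/- Fix n ≥ 1. The dyadic intervals I_α ⊂ (0,1] indexed by multi-indices of the form α = (0_{k_1}, 1, 0_{k_2}, 1, …, 1, 0_{k_{s-1}}, 1, 0_n) with s ≥ 1 and 0 ≤ k_1, …, k_{s-1} < n are pairwise disjoint. (For s = 1, α = 0_n.) -/
/-- The natural number `j` with binary digits `α`, so that `I_α = (j/2^k, (j+1)/2^k]`
with `k = |α|`. -/
def dyadicVal (α : List Bool) : ℕ :=
  α.foldl (fun acc b => 2 * acc + (if b then 1 else 0)) 0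

/-- The dyadic interval `I_α ⊆ (0,1]` indexed by a 0–1 multi-index `α`. -/
def dyadicInterval (α : List Bool) : Set ℝ :=
  Set.Ioc ((dyadicVal α : ℝ) / 2 ^ α.length) (((dyadicVal α : ℝ) + 1) / 2 ^ α.length)

/-- The multi-index `(0_{k_1}, 1, 0_{k_2}, 1, …, 1, 0_{k_{s-1}}, 1, 0_n)`
encoded by the list `ks = [k_1, …, k_{s-1}]` (empty list gives `0_n`). -/
def blockIndex (ks : List ℕ) (n : ℕ) : List Bool :=
  (ks.map fun k => List.replicate k false ++ [true]).flatten ++ List.replicate n false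

namespace Stmt5Aux

lemma foldl_eq (l : List Bool) (a : ℕ) :
    l.foldl (fun acc b => 2 * acc + (if b then 1 else 0)) a
      = a * 2 ^ l.length + l.foldl (fun acc b => 2 * acc + (if b then 1 else 0)) 0 := by
  induction l generalizing a with
  | nil => simp
  | cons b t ih =>
    simp only [List.foldl_cons, List.length_cons]
    rw [ih (2 * a + _), ih (2 * 0 + _)]
    ring

lemma dyadicVal_append (α γ : List Bool) :
    dyadicVal (α ++ γ) = dyadicVal α * 2 ^ γ.length + dyadicVal γ := by
  unfold dyadicVal
  rw [List.foldl_append, foldl_eq]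

lemma dyadicVal_cons (b : Bool) (t : List Bool) :
    dyadicVal (b :: t) = (if b then 1 else 0) * 2 ^ t.length + dyadicVal t := by
  have := dyadicVal_append [b] t
  simpa [dyadicVal] using this

lemma dyadicVal_lt (l : List Bool) : dyadicVal l < 2 ^ l.length := by
  induction l with
  | nil => simp [dyadicVal]
  | cons b t ih =>
    rw [dyadicVal_cons, List.length_cons, pow_succ]
    cases b <;> simp <;> omega

lemma dyadicVal_inj : ∀ (α β : List Bool), α.length = β.length →
    dyadicVal α = dyadicVal β → α = β := by
  intro α
  induction α with
  | nil =>
    intro β hl _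
    cases β with
    | nil => rfl
    | cons b t => simp at hl
  | cons a t ih =>
    intro β hl hv
    cases β with
    | nil => simp at hl
    | cons b t' =>
      simp only [List.length_cons, Nat.succ_inj] at hl
      rw [dyadicVal_cons, dyadicVal_cons] at hv
      rw [hl] at hv
      have h1 := dyadicVal_lt t
      have h2 := dyadicVal_lt t'
      rw [hl] at h1
      have hab : a = b := by
        cases a <;> cases b <;> simp at hv ⊢ <;> omega
      subst hab
      have : dyadicVal t = dyadicVal t' := by
        cases a <;> simp at hv <;> omega
      rw [ih t' hl this]

lemma prefix_of_not_disjoint (α β : List Bool) (hlen : α.length ≤ β.length)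
    (h : ¬ Disjoint (dyadicInterval α) (dyadicInterval β)) : α <+: β := by
  set m := α.length with hm
  set m' := β.length with hm'
  set a := dyadicVal α with ha
  set b := dyadicVal β with hb
  rw [dyadicInterval, dyadicInterval, Set.Ioc_disjoint_Ioc, not_le, max_lt_iff, lt_min_iff,
    lt_min_iff] at h
  obtain ⟨⟨_, h1⟩, ⟨h2, _⟩⟩ := h
  -- h1 : a / 2^m < (b+1)/2^m',  h2 : b/2^m' < (a+1)/2^m
  have p2m : (0:ℝ) < 2 ^ m := by positivity
  have p2m' : (0:ℝ) < 2 ^ m' := by positivity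
  rw [div_lt_div_iff₀ p2m p2m'] at h1
  rw [div_lt_div_iff₀ p2m' p2m] at h2
  have h1n : a * 2 ^ m' < (b + 1) * 2 ^ m := by exact_mod_cast h1
  have h2n : b * 2 ^ m < (a + 1) * 2 ^ m' := by exact_mod_cast h2
  set d := m' - m with hd
  have hmd : m' = m + d := by omega
  rw [hmd, pow_add] at h1n h2n
  have h1' : a * 2 ^ d < b + 1 := by
    have : a * 2 ^ d * 2 ^ m < (b + 1) * 2 ^ m := by
      calc a * 2 ^ d * 2 ^ m = a * (2 ^ m * 2 ^ d) := by ring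
      _ < (b + 1) * 2 ^ m := h1n
    exact Nat.lt_of_mul_lt_mul_right this
  have h2' : b < (a + 1) * 2 ^ d := by
    have : b * 2 ^ m < (a + 1) * 2 ^ d * 2 ^ m := by
      calc b * 2 ^ m < (a + 1) * (2 ^ m * 2 ^ d) := h2n
      _ = (a + 1) * 2 ^ d * 2 ^ m := by ring
    exact Nat.lt_of_mul_lt_mul_right this
  -- now show take m β = α
  have hsplit : β = β.take m ++ β.drop m := (List.take_append_drop m β).symm
  have hlt : (β.take m).length = m := by
    rw [List.length_take]; omega
  have hld : (β.drop m).length = d := by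
    rw [List.length_drop]
  have hbval : b = dyadicVal (β.take m) * 2 ^ d + dyadicVal (β.drop m) := by
    conv_lhs => rw [hb, hsplit]
    rw [dyadicVal_append, hld]
  have hr : dyadicVal (β.drop m) < 2 ^ d := by
    have := dyadicVal_lt (β.drop m); rwa [hld] at this
  set t := dyadicVal (β.take m) with ht
  have hta : t = a := by
    by_contra hne
    rcases Nat.lt_or_ge t a with h | h
    · have : (t + 1) * 2 ^ d ≤ a * 2 ^ d := Nat.mul_le_mul_right _ h
      have : b < a * 2 ^ d := by
        calc b = t * 2 ^ d + dyadicVal (β.drop m) := hbval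
        _ < (t + 1) * 2 ^ d := by rw [add_mul, one_mul]; omega
        _ ≤ a * 2 ^ d := this
      omega
    · have h' : a + 1 ≤ t := by omega
      have : (a + 1) * 2 ^ d ≤ t * 2 ^ d := Nat.mul_le_mul_right _ h'
      have : (a + 1) * 2 ^ d ≤ b := by
        calc (a + 1) * 2 ^ d ≤ t * 2 ^ d := this
        _ ≤ b := by rw [hbval]; omega
      omega
  have : β.take m = α := dyadicVal_inj _ _ (by rw [hlt, hm]) (by rw [← ht, hta, ha])
  rw [← this]
  exact List.take_prefix m β

lemma blockIndex_nil (n : ℕ) : blockIndex [] n = List.replicate n false := by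
  simp [blockIndex]

lemma blockIndex_cons (k n : ℕ) (rest : List ℕ) :
    blockIndex (k :: rest) n = List.replicate k false ++ true :: blockIndex rest n := by
  simp [blockIndex, List.append_assoc]

lemma elem_k (k : ℕ) (A : List Bool) (h : k < (List.replicate k false ++ true :: A).length) :
    (List.replicate k false ++ true :: A)[k] = true := by
  rw [List.getElem_append_right (by simp)]
  simp

lemma blockIndex_prefix (n : ℕ) : ∀ ks ks' : List ℕ, (∀ k ∈ ks, k < n) → (∀ k ∈ ks', k < n) →
    blockIndex ks n <+: blockIndex ks' n → ks = ks' := by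
  intro ks
  induction ks with
  | nil =>
    intro ks' _ hks' hpre
    cases ks' with
    | nil => rfl
    | cons k' rest' =>
      exfalso
      rw [blockIndex_nil, blockIndex_cons] at hpre
      have hk' : k' < n := hks' k' (by simp)
      have hkl : k' < (List.replicate n false).length := by simpa using hk'
      have := hpre.getElem hkl
      rw [List.getElem_replicate] at this
      rw [elem_k] at this
      simp at this
  | cons k rest ih =>
    intro ks' hks hks' hpre
    cases ks' with
    | nil =>
      exfalso
      rw [blockIndex_nil, blockIndex_cons] at hpre
      have hk : k < n := hks k (by simp)
      have hkl : k < (List.replicate k false ++ true :: blockIndex rest n).length := by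
        simp
      have := hpre.getElem hkl
      rw [elem_k] at this
      have h2 : (List.replicate n false)[k]'(by simpa using hk) = false :=
        List.getElem_replicate _
      rw [h2] at this
      simp at this
    | cons k' rest' =>
      rw [blockIndex_cons, blockIndex_cons] at hpre
      have hkk' : k = k' := by
        rcases lt_trichotomy k k' with h | h | h
        · exfalso
          have hkl : k < (List.replicate k false ++ true :: blockIndex rest n).length := by
            simp
          have heq := hpre.getElem hkl
          rw [elem_k] at heq
          have hkl2 : k < (List.replicate k' false).length := by simpa using h
          rw [List.getElem_append_left hkl2, List.getElem_replicate] at heq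
          simp at heq
        · exact h
        · exfalso
          have hkl : k' < (List.replicate k false ++ true :: blockIndex rest n).length := by
            simp; omega
          have heq := hpre.getElem hkl
          have hkl2 : k' < (List.replicate k false).length := by simpa using h
          rw [List.getElem_append_left hkl2, List.getElem_replicate] at heq
          rw [elem_k] at heq
          simp at heq
      subst hkk'
      have hpre' : blockIndex rest n <+: blockIndex rest' n := by
        have : (List.replicate k false ++ [true]) ++ blockIndex rest n <+:
            (List.replicate k false ++ [true]) ++ blockIndex rest' n := by
          simpa [List.append_assoc] using hpre
        exact (List.prefix_append_right_inj _).mp this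
      have := ih rest' (fun x hx => hks x (by simp [hx]))
        (fun x hx => hks' x (by simp [hx])) hpre'
      rw [this]

lemma blockIndex_length (ks : List ℕ) (n : ℕ) :
    n ≤ (blockIndex ks n).length := by
  simp [blockIndex]

end Stmt5Aux

/-- for fixed `n ≥ 1`, the dyadic intervals indexed by multi-indices of
the form `(0_{k_1},1,…,1,0_{k_{s-1}},1,0_n)` with all `k_i < n` are pairwise disjoint. -/
theorem stmt5 (n : ℕ) (hn : 1 ≤ n) (ks ks' : List ℕ)
    (hks : ∀ k ∈ ks, k < n) (hks' : ∀ k ∈ ks', k < n) (hne : ks ≠ ks') :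
    Disjoint (dyadicInterval (blockIndex ks n)) (dyadicInterval (blockIndex ks' n)) := by
  by_contra h
  rcases le_total (blockIndex ks n).length (blockIndex ks' n).length with hl | hl
  · have hpre := Stmt5Aux.prefix_of_not_disjoint _ _ hl h
    exact hne (Stmt5Aux.blockIndex_prefix n ks ks' hks hks' hpre)
  · have h' : ¬ Disjoint (dyadicInterval (blockIndex ks' n)) (dyadicInterval (blockIndex ks n)) :=
      fun hd => h hd.symm
    have hpre := Stmt5Aux.prefix_of_not_disjoint _ _ hl h'
    exact hne (Stmt5Aux.blockIndex_prefix n ks' ks hks' hks hpre).symm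
end

section
/- For a first-order Haar chaos f with coefficients (c_k), one has Σ_{k≥0} |f(1/2^k) - f(1/2^{k+1})| = Σ_{k≥0} |2c_k - c_{k+1}|, and this quantity is equivalent (with absolute constants) to Σ_{k≥0} |c_k|: specifically Σ_k |2c_k - c_{k+1}| ≤ 3 Σ_k |c_k|, and conversely Σ_k |c_k| ≲ Σ_k |2c_k - c_{k+1}| whenever the latter is finite and c_k → 0. -/
open scoped ENNReal NNReal

set_option maxHeartbeats 1000000

private lemma partial_sum_id (c : ℕ → ℂ) (k n : ℕ) :
    ∑ j ∈ Finset.range n, (2 * c (k + j) - c (k + j + 1)) / 2 ^ (j + 1)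
      = c k - c (k + n) / 2 ^ n := by
  induction n with
  | zero => simp
  | succ n ih =>
    rw [Finset.sum_range_succ, ih]
    have h2 : (2 : ℂ) ^ n ≠ 0 := pow_ne_zero _ two_ne_zero
    have : k + n + 1 = k + (n + 1) := by ring
    rw [this]
    field_simp
    ring

private lemma key_ineq (c : ℕ → ℂ) (hc : Filter.Tendsto c Filter.atTop (nhds 0))
    (hfin : (∑' m : ℕ, (‖2 * c m - c (m + 1)‖₊ : ℝ≥0∞)) ≠ ⊤) (k : ℕ) :
    (‖c k‖₊ : ℝ≥0∞) ≤ ∑' j : ℕ, (‖2 * c (k + j) - c (k + j + 1)‖₊ : ℝ≥0∞) * (2 ^ (j + 1))⁻¹ := by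
  set f : ℕ → ℂ := fun j => (2 * c (k + j) - c (k + j + 1)) / 2 ^ (j + 1) with hf
  have hnn : ∀ j, ‖f j‖₊ = ‖2 * c (k + j) - c (k + j + 1)‖₊ / 2 ^ (j + 1) := by
    intro j
    simp [hf, nnnorm_div, nnnorm_pow]
  have hshift : Summable fun j => ‖2 * c (k + j) - c (k + j + 1)‖₊ := by
    apply ENNReal.tsum_coe_ne_top_iff_summable.mp
    refine ne_top_of_le_ne_top hfin ?_
    exact ENNReal.tsum_comp_le_tsum_of_injective (add_right_injective k)
      fun m => (‖2 * c m - c (m + 1)‖₊ : ℝ≥0∞)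
  have hsumnorm : Summable fun j => ‖f j‖₊ := by
    refine NNReal.summable_of_le (fun j => ?_) hshift
    show ‖f j‖₊ ≤ ‖2 * c (k + j) - c (k + j + 1)‖₊
    rw [hnn]
    exact div_le_self zero_le (one_le_pow₀ one_le_two)
  have hsumf : Summable f := hsumnorm.of_nnnorm
  have hhs : HasSum f (c k) := by
    rw [hsumf.hasSum_iff_tendsto_nat]
    have := fun n => partial_sum_id c k n
    simp only [← hf] at this
    simp_rw [this]
    have h0 : Filter.Tendsto (fun n => c (k + n) / 2 ^ n) Filter.atTop (nhds 0) := by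
      have hk : Filter.Tendsto (fun n : ℕ => k + n) Filter.atTop Filter.atTop :=
        Filter.tendsto_atTop_mono (fun n => Nat.le_add_left n k) Filter.tendsto_id
      refine squeeze_zero_norm (fun n => ?_)
        (tendsto_zero_iff_norm_tendsto_zero.mp (hc.comp hk))
      rw [norm_div]
      apply div_le_self (norm_nonneg _)
      simp only [norm_pow, Complex.norm_ofNat]
      exact one_le_pow₀ one_le_two
    simpa using Filter.Tendsto.sub (tendsto_const_nhds) h0
  have hle : ‖c k‖₊ ≤ ∑' j, ‖f j‖₊ := hhs.tsum_eq ▸ nnnorm_tsum_le hsumnorm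
  calc (‖c k‖₊ : ℝ≥0∞) ≤ ((∑' j, ‖f j‖₊ : ℝ≥0) : ℝ≥0∞) := ENNReal.coe_le_coe.mpr hle
    _ = ∑' j, (‖f j‖₊ : ℝ≥0∞) := ENNReal.coe_tsum hsumnorm
    _ = ∑' j : ℕ, (‖2 * c (k + j) - c (k + j + 1)‖₊ : ℝ≥0∞) * (2 ^ (j + 1))⁻¹ := by
        refine tsum_congr fun j => ?_
        rw [hnn, ENNReal.coe_div (by positivity), div_eq_mul_inv]
        push_cast
        rfl

/-- for a first-order Haar chaos with coefficients `c` and values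
`f(1/2^k) = -c_k + Σ_{j<k} c_j`, the variation sum `Σ_k |f(1/2^k) - f(1/2^{k+1})|`
equals `Σ_k |2c_k - c_{k+1}|`; moreover `Σ_k |2c_k - c_{k+1}| ≤ 3 Σ_k |c_k|` and,
with a uniform finite constant `C`, `Σ_k |c_k| ≤ C Σ_k |2c_k - c_{k+1}|` whenever
`c_k → 0` (sums taken in `ℝ≥0∞`, so finiteness of the right-hand side is implicit). -/
theorem stmt11 :
    ∃ C : ℝ≥0∞, 0 < C ∧ C < ⊤ ∧ ∀ c : ℕ → ℂ,
      (∑' k : ℕ, (‖(-c k + ∑ j ∈ Finset.range k, c j)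
          - (-c (k+1) + ∑ j ∈ Finset.range (k+1), c j)‖₊ : ℝ≥0∞))
        = (∑' k : ℕ, (‖2 * c k - c (k+1)‖₊ : ℝ≥0∞)) ∧
      (∑' k : ℕ, (‖2 * c k - c (k+1)‖₊ : ℝ≥0∞)) ≤ 3 * ∑' k : ℕ, (‖c k‖₊ : ℝ≥0∞) ∧
      (Filter.Tendsto c Filter.atTop (nhds 0) →
        (∑' k : ℕ, (‖c k‖₊ : ℝ≥0∞)) ≤ C * ∑' k : ℕ, (‖2 * c k - c (k+1)‖₊ : ℝ≥0∞)) := by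
  refine ⟨1, one_pos, ENNReal.one_lt_top, fun c => ⟨?_, ?_, ?_⟩⟩
  · refine tsum_congr fun k => ?_
    congr 1
    have : (-c k + ∑ j ∈ Finset.range k, c j)
        - (-c (k+1) + ∑ j ∈ Finset.range (k+1), c j) = -(2 * c k - c (k+1)) := by
      rw [Finset.sum_range_succ]; ring
    rw [this, nnnorm_neg]
  · calc ∑' k : ℕ, (‖2 * c k - c (k+1)‖₊ : ℝ≥0∞)
        ≤ ∑' k : ℕ, (2 * (‖c k‖₊ : ℝ≥0∞) + (‖c (k+1)‖₊ : ℝ≥0∞)) := by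
          refine ENNReal.tsum_le_tsum fun k => ?_
          calc (‖2 * c k - c (k+1)‖₊ : ℝ≥0∞) ≤ (‖2 * c k‖₊ : ℝ≥0∞) + (‖c (k+1)‖₊ : ℝ≥0∞) := by
                exact_mod_cast nnnorm_sub_le _ _
            _ = 2 * (‖c k‖₊ : ℝ≥0∞) + (‖c (k+1)‖₊ : ℝ≥0∞) := by
                congr 1
                rw [nnnorm_mul]
                push_cast
                norm_num
      _ = 2 * (∑' k : ℕ, (‖c k‖₊ : ℝ≥0∞)) + ∑' k : ℕ, (‖c (k+1)‖₊ : ℝ≥0∞) := by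
          rw [ENNReal.tsum_add, ENNReal.tsum_mul_left]
      _ ≤ 2 * (∑' k : ℕ, (‖c k‖₊ : ℝ≥0∞)) + ∑' k : ℕ, (‖c k‖₊ : ℝ≥0∞) := by
          exact add_le_add_right (ENNReal.tsum_comp_le_tsum_of_injective
            (add_left_injective 1) fun k => (‖c k‖₊ : ℝ≥0∞)) _
      _ = 3 * ∑' k : ℕ, (‖c k‖₊ : ℝ≥0∞) := by ring
  · intro hc
    rw [one_mul]
    by_cases hfin : (∑' k : ℕ, (‖2 * c k - c (k+1)‖₊ : ℝ≥0∞)) = ⊤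
    · simp [hfin]
    calc ∑' k : ℕ, (‖c k‖₊ : ℝ≥0∞)
        ≤ ∑' k : ℕ, ∑' j : ℕ, (‖2 * c (k + j) - c (k + j + 1)‖₊ : ℝ≥0∞) * (2 ^ (j + 1))⁻¹ :=
          ENNReal.tsum_le_tsum fun k => key_ineq c hc hfin k
      _ = ∑' j : ℕ, ∑' k : ℕ, (‖2 * c (k + j) - c (k + j + 1)‖₊ : ℝ≥0∞) * (2 ^ (j + 1))⁻¹ :=
          ENNReal.tsum_comm
      _ = ∑' j : ℕ, (∑' k : ℕ, (‖2 * c (k + j) - c (k + j + 1)‖₊ : ℝ≥0∞)) * (2 ^ (j + 1))⁻¹ := by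
          refine tsum_congr fun j => ?_
          rw [ENNReal.tsum_mul_right]
      _ ≤ ∑' j : ℕ, (∑' m : ℕ, (‖2 * c m - c (m + 1)‖₊ : ℝ≥0∞)) * (2 ^ (j + 1))⁻¹ := by
          refine ENNReal.tsum_le_tsum fun j => ?_
          exact mul_le_mul_left (ENNReal.tsum_comp_le_tsum_of_injective
            (add_left_injective j) fun m => (‖2 * c m - c (m + 1)‖₊ : ℝ≥0∞)) _
      _ = (∑' m : ℕ, (‖2 * c m - c (m + 1)‖₊ : ℝ≥0∞)) * ∑' j : ℕ, ((2 : ℝ≥0∞) ^ (j + 1))⁻¹ :=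
          ENNReal.tsum_mul_left
      _ ≤ ∑' m : ℕ, (‖2 * c m - c (m + 1)‖₊ : ℝ≥0∞) := by
          nth_rewrite 2 [← mul_one (∑' m : ℕ, (‖2 * c m - c (m + 1)‖₊ : ℝ≥0∞))]
          gcongr
          have : ∀ j : ℕ, ((2 : ℝ≥0∞) ^ (j + 1))⁻¹ = 2⁻¹ * (2⁻¹) ^ j := by
            intro j
            rw [pow_succ, ENNReal.mul_inv (by norm_num) (by norm_num), ← ENNReal.inv_pow]
            ring
          simp_rw [this]
          rw [ENNReal.tsum_mul_left, ENNReal.tsum_geometric]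
          rw [ENNReal.one_sub_inv_two]
          simp [ENNReal.inv_mul_cancel]
end
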